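/- Let ε_n = (log n)^{1/3} n^{-1/3}, S_n of order n ε_n^2 (log n)^{-1}, c_n = b n ε_n^{-2} for some b > 0, and suppose δ_n log(T_n/t_n) ≤ A log n for some A > 0 with 0 < t_n < T_n. Then there exists a constant K > 0 such that (c_n + S_n)^{c_n + S_n + 1/2} c_n^{-c_n} (T_n/t_n)^{δ_n S_n} ≤ e^{K n ε_n^2} for all sufficiently large n. -/

import Mathlib

/-- The target rate `ε_n = (log n)^{1/3} n^{-1/3}`. -/
noncomputable def epsn (n : ℕ) : ℝ :=
  (Real.log n) ^ ((1 : ℝ) / 3) * (n : ℝ) ^ (-(1 : ℝ) / 3)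

lemma epsn_sq_eq (n : ℕ) (hn : 1 ≤ n) :
    epsn n ^ (2 : ℕ) = (Real.log n) ^ ((2 : ℝ) / 3) * (n : ℝ) ^ (-(2 : ℝ) / 3) := by
  have hlog : (0:ℝ) ≤ Real.log n := Real.log_nonneg (by exact_mod_cast hn)
  have hnn : (0:ℝ) ≤ (n:ℝ) := by positivity
  rw [epsn, mul_pow, ← Real.rpow_natCast ((Real.log n) ^ ((1:ℝ)/3)) 2,
      ← Real.rpow_natCast (((n:ℝ)) ^ (-(1:ℝ)/3)) 2,
      ← Real.rpow_mul hlog, ← Real.rpow_mul hnn]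
  norm_num

set_option maxHeartbeats 800000 in
/-- **Global prior bound is exponentially small.**  With `ε_n = (log n)^{1/3} n^{-1/3}`,
`S_n` of order `n ε_n² (log n)⁻¹`, `c_n = b n ε_n⁻²` and `δ_n log(T_n/t_n) ≤ A log n`,
there is `K > 0` with
`(c_n + S_n)^{c_n+S_n+1/2} c_n^{-c_n} (T_n/t_n)^{δ_n S_n} ≤ e^{K n ε_n²}` for large `n`. -/
theorem global_prior_bound_exponential
    (S : ℕ → ℕ) (c δ t T : ℕ → ℝ)
    (a₁ a₂ : ℝ) (ha₁ : 0 < a₁) (ha₂ : 0 < a₂)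
    (hS : ∀ n : ℕ, 2 ≤ n →
      a₁ * (n * epsn n ^ (2 : ℕ) / Real.log n) ≤ (S n : ℝ) ∧
      (S n : ℝ) ≤ a₂ * (n * epsn n ^ (2 : ℕ) / Real.log n))
    (b : ℝ) (hb : 0 < b) (hc : ∀ n : ℕ, 2 ≤ n → c n = b * n * ((epsn n) ^ (2 : ℕ))⁻¹)
    (A : ℝ) (hA : 0 < A)
    (hδlog : ∀ n : ℕ, 2 ≤ n → δ n * Real.log (T n / t n) ≤ A * Real.log n)
    (hδ_pos : ∀ n, 0 < δ n) (ht_pos : ∀ n, 0 < t n) (htT : ∀ n, t n < T n) :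
    ∃ K : ℝ, 0 < K ∧ ∃ N : ℕ, ∀ n : ℕ, N ≤ n →
      (c n + S n) ^ (c n + S n + 1 / 2) * c n ^ (-c n) * (T n / t n) ^ (δ n * S n) ≤
        Real.exp (K * (n * epsn n ^ (2 : ℕ))) := by
  refine ⟨a₂ * (4 + A) + 2, by positivity, ⌈b + a₂⌉₊ + 3, fun n hn => ?_⟩
  have hn2 : 2 ≤ n := by omega
  have hn3 : 3 ≤ n := by omega
  have hnR : (3:ℝ) ≤ (n:ℝ) := by exact_mod_cast hn3
  have hnpos : (0:ℝ) < (n:ℝ) := by linarith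
  have hba : b + a₂ ≤ (n:ℝ) := by
    have h1 : b + a₂ ≤ (⌈b + a₂⌉₊ : ℝ) := Nat.le_ceil _
    have h2 : (⌈b + a₂⌉₊ : ℝ) ≤ (n:ℝ) := by
      exact_mod_cast (by omega : ⌈b + a₂⌉₊ ≤ n)
    linarith
  have hlog1 : (1:ℝ) ≤ Real.log n := by
    rw [Real.le_log_iff_exp_le hnpos]
    have := Real.exp_one_lt_d9
    linarith
  have hlogpos : (0:ℝ) < Real.log n := by linarith
  have hlognn : (0:ℝ) ≤ Real.log n := hlogpos.le
  have hlogn : Real.log n ≤ (n:ℝ) := Real.log_le_self hnpos.le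
  -- rewrite n ε² in rpow form
  have hE : (n:ℝ) * epsn n ^ (2:ℕ) = (n:ℝ)^((1:ℝ)/3) * Real.log n ^ ((2:ℝ)/3) := by
    rw [epsn_sq_eq n (by omega)]
    have h13 : (n:ℝ)^((1:ℝ)/3) = (n:ℝ)^(1:ℝ) * (n:ℝ)^(-(2:ℝ)/3) := by
      rw [← Real.rpow_add hnpos]; norm_num
    rw [h13, Real.rpow_one]; ring
  have hEnn : (0:ℝ) ≤ (n:ℝ) * epsn n ^ (2:ℕ) := by positivity
  -- log n ≤ n ε²
  have ha : Real.log n ≤ (n:ℝ) * epsn n ^ (2:ℕ) := by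
    have h1 : Real.log n ^ ((1:ℝ)/3) ≤ (n:ℝ)^((1:ℝ)/3) :=
      Real.rpow_le_rpow hlognn hlogn (by norm_num)
    rw [hE]
    calc Real.log n = Real.log n ^ ((1:ℝ)/3) * Real.log n ^ ((2:ℝ)/3) := by
          rw [← Real.rpow_add hlogpos]; norm_num
      _ ≤ (n:ℝ)^((1:ℝ)/3) * Real.log n ^ ((2:ℝ)/3) :=
          mul_le_mul_of_nonneg_right h1 (Real.rpow_nonneg hlognn _)
  -- n ε² ≤ n
  have hEn : (n:ℝ) * epsn n ^ (2:ℕ) ≤ (n:ℝ) := by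
    rw [hE]
    have h1 : Real.log n ^ ((2:ℝ)/3) ≤ (n:ℝ) ^ ((2:ℝ)/3) :=
      Real.rpow_le_rpow hlognn hlogn (by norm_num)
    calc (n:ℝ)^((1:ℝ)/3) * Real.log n ^ ((2:ℝ)/3)
        ≤ (n:ℝ)^((1:ℝ)/3) * (n:ℝ)^((2:ℝ)/3) :=
          mul_le_mul_of_nonneg_left h1 (Real.rpow_nonneg hnpos.le _)
      _ = (n:ℝ) := by rw [← Real.rpow_add hnpos]; norm_num
  -- (ε²)⁻¹ ≤ n
  have hinv : ((epsn n) ^ (2:ℕ))⁻¹ ≤ (n:ℝ) := by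
    rw [epsn_sq_eq n (by omega), mul_inv]
    have h0 : (1:ℝ) ≤ Real.log n ^ ((2:ℝ)/3) := by
      calc (1:ℝ) = (1:ℝ) ^ ((2:ℝ)/3) := (Real.one_rpow _).symm
        _ ≤ Real.log n ^ ((2:ℝ)/3) := Real.rpow_le_rpow (by norm_num) hlog1 (by norm_num)
    have h1 : (Real.log n ^ ((2:ℝ)/3))⁻¹ ≤ 1 := inv_le_one_of_one_le₀ h0
    have h2 : ((n:ℝ) ^ (-(2:ℝ)/3))⁻¹ = (n:ℝ) ^ ((2:ℝ)/3) := by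
      rw [← Real.rpow_neg hnpos.le]; norm_num
    have h3 : (n:ℝ) ^ ((2:ℝ)/3) ≤ (n:ℝ) := by
      calc (n:ℝ) ^ ((2:ℝ)/3) ≤ (n:ℝ) ^ (1:ℝ) :=
            Real.rpow_le_rpow_of_exponent_le (by linarith) (by norm_num)
        _ = (n:ℝ) := Real.rpow_one _
    calc (Real.log n ^ ((2:ℝ)/3))⁻¹ * ((n:ℝ) ^ (-(2:ℝ)/3))⁻¹
        ≤ 1 * (n:ℝ) := by
          rw [h2]
          exact mul_le_mul h1 h3 (Real.rpow_nonneg hnpos.le _) (by norm_num)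
      _ = (n:ℝ) := one_mul _
  obtain ⟨hS1, hS2⟩ := hS n hn2
  have hSnn : (0:ℝ) ≤ (S n : ℝ) := Nat.cast_nonneg _
  -- S ≤ a₂ E and S log n ≤ a₂ E
  have hS_le_E : (S n : ℝ) ≤ a₂ * ((n:ℝ) * epsn n ^ (2:ℕ)) :=
    hS2.trans (mul_le_mul_of_nonneg_left (div_le_self hEnn hlog1) ha₂.le)
  have hSlog : (S n : ℝ) * Real.log n ≤ a₂ * ((n:ℝ) * epsn n ^ (2:ℕ)) := by
    have h := mul_le_mul_of_nonneg_right hS2 hlognn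
    calc (S n:ℝ) * Real.log n
        ≤ a₂ * ((n:ℝ) * epsn n ^ (2:ℕ) / Real.log n) * Real.log n := h
      _ = a₂ * ((n:ℝ) * epsn n ^ (2:ℕ)) := by
          field_simp
  have hS_le_n : (S n : ℝ) ≤ a₂ * (n:ℝ) :=
    hS_le_E.trans (mul_le_mul_of_nonneg_left hEn ha₂.le)
  -- positivity of c
  have heps : 0 < epsn n :=
    mul_pos (Real.rpow_pos_of_pos hlogpos _) (Real.rpow_pos_of_pos hnpos _)
  have hc_pos : 0 < c n := by
    rw [hc n hn2]
    exact mul_pos (mul_pos hb hnpos) (inv_pos.mpr (pow_pos heps 2))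
  have hcS_pos : 0 < c n + S n := by linarith
  have hc_le : c n ≤ b * ((n:ℝ) * (n:ℝ)) := by
    rw [hc n hn2]
    calc b * (n:ℝ) * ((epsn n ^ (2:ℕ))⁻¹) ≤ b * (n:ℝ) * (n:ℝ) :=
          mul_le_mul_of_nonneg_left hinv (by positivity)
      _ = b * ((n:ℝ) * (n:ℝ)) := by ring
  have hcube : c n + S n ≤ (n:ℝ)^(3:ℕ) := by
    have h1 : (n:ℝ) ≤ (n:ℝ) * (n:ℝ) := by nlinarith
    have h2 : (S n : ℝ) ≤ a₂ * ((n:ℝ) * (n:ℝ)) :=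
      hS_le_n.trans (mul_le_mul_of_nonneg_left h1 ha₂.le)
    have h3 : (b + a₂) * ((n:ℝ) * (n:ℝ)) ≤ (n:ℝ) * ((n:ℝ) * (n:ℝ)) :=
      mul_le_mul_of_nonneg_right hba (by positivity)
    calc c n + S n ≤ b * ((n:ℝ)*(n:ℝ)) + a₂ * ((n:ℝ)*(n:ℝ)) := add_le_add hc_le h2
      _ = (b + a₂) * ((n:ℝ)*(n:ℝ)) := by ring
      _ ≤ (n:ℝ) * ((n:ℝ)*(n:ℝ)) := h3
      _ = (n:ℝ)^(3:ℕ) := by ring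
  have hlog_cS : Real.log (c n + S n) ≤ 3 * Real.log n := by
    have h := Real.log_le_log hcS_pos hcube
    rw [Real.log_pow] at h
    push_cast at h
    exact h
  -- the three bounds on the log
  have B1 : c n * (Real.log (c n + S n) - Real.log (c n)) ≤ (S n : ℝ) := by
    rw [← Real.log_div (ne_of_gt hcS_pos) (ne_of_gt hc_pos)]
    have h := Real.log_le_sub_one_of_pos (div_pos hcS_pos hc_pos)
    calc c n * Real.log ((c n + S n) / c n)
        ≤ c n * ((c n + S n) / c n - 1) := mul_le_mul_of_nonneg_left h hc_pos.le
      _ = (S n : ℝ) := by field_simp; ring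
  have B2 : ((S n:ℝ) + 1/2) * Real.log (c n + S n)
      ≤ 3 * ((S n:ℝ) * Real.log n) + (3/2) * Real.log n := by
    have h := mul_le_mul_of_nonneg_left hlog_cS (by linarith : (0:ℝ) ≤ (S n:ℝ) + 1/2)
    calc ((S n:ℝ) + 1/2) * Real.log (c n + S n)
        ≤ ((S n:ℝ) + 1/2) * (3 * Real.log n) := h
      _ = 3 * ((S n:ℝ) * Real.log n) + (3/2) * Real.log n := by ring
  have B3 : (δ n * (S n:ℝ)) * Real.log (T n / t n) ≤ A * ((S n:ℝ) * Real.log n) := by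
    have h := mul_le_mul_of_nonneg_left (hδlog n hn2) hSnn
    calc (δ n * (S n:ℝ)) * Real.log (T n / t n)
        = (S n:ℝ) * (δ n * Real.log (T n / t n)) := by ring
      _ ≤ (S n:ℝ) * (A * Real.log n) := h
      _ = A * ((S n:ℝ) * Real.log n) := by ring
  -- assemble
  have hT : 0 < T n / t n := div_pos ((ht_pos n).trans (htT n)) (ht_pos n)
  rw [Real.rpow_def_of_pos hcS_pos, Real.rpow_def_of_pos hc_pos,
      Real.rpow_def_of_pos hT, ← Real.exp_add, ← Real.exp_add, Real.exp_le_exp]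
  have hring : Real.log (c n + S n) * (c n + S n + 1/2) + Real.log (c n) * (-c n)
        + Real.log (T n / t n) * (δ n * (S n:ℝ))
      = c n * (Real.log (c n + S n) - Real.log (c n))
        + ((S n:ℝ) + 1/2) * Real.log (c n + S n)
        + (δ n * (S n:ℝ)) * Real.log (T n / t n) := by ring
  rw [hring]
  have h3 : A * ((S n:ℝ) * Real.log n) ≤ A * (a₂ * ((n:ℝ) * epsn n ^ (2:ℕ))) :=
    mul_le_mul_of_nonneg_left hSlog hA.le
  nlinarith [B1, B2, B3, hS_le_E, hSlog, h3, hEnn, ha]
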